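/- Let q ≥ 2 and n, d be positive integers, and let L be a positive integer with L^d ≥ d·log_q(n) + log_q(q/(q-1)) and L ≤ n. Then the number of arrays in Σ_q^{[n]^d} that avoid all zero L-cubes is at least q^(n^d - 1); equivalently, the redundancy n^d - log_q |C_{d,q}(n,L)| is at most 1. -/
import Mathlib

open Finset

/-- `W` contains an all-zero `L × ⋯ × L` subcube at position `v ∈ ℕ^d`. -/
def zeroCubeAt (n d L q : ℕ) (W : (Fin d → Fin n) → Fin q) (v : Fin d → ℕ) : Prop :=
  (∀ i, v i + L ≤ n) ∧
  ∀ x : Fin d → Fin n, (∀ i, v i ≤ (x i : ℕ) ∧ (x i : ℕ) < v i + L) → (W x : ℕ) = 0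

lemma cubeCard (n d L : ℕ) (v : Fin d → Fin n) (hv : ∀ i, (v i : ℕ) + L ≤ n) :
    (univ.filter (fun x : Fin d → Fin n => ∀ i, (v i:ℕ) ≤ (x i:ℕ) ∧ (x i:ℕ) < (v i:ℕ) + L)).card
      = L ^ d := by
  classical
  set S := univ.filter (fun x : Fin d → Fin n => ∀ i, (v i:ℕ) ≤ (x i:ℕ) ∧ (x i:ℕ) < (v i:ℕ) + L)
  have hf : ∀ (j : Fin d → Fin L) (i : Fin d), (v i : ℕ) + (j i : ℕ) < n := by
    intro j i; have := (j i).2; have := hv i; omega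
  set f : (Fin d → Fin L) → (Fin d → Fin n) := fun j i => ⟨(v i : ℕ) + (j i : ℕ), hf j i⟩
  have hinj : Function.Injective f := by
    intro j j' h
    funext i
    have := congrFun h i
    simp only [f, Fin.mk.injEq] at this
    exact Fin.ext (by omega)
  have himg : S = Finset.image f univ := by
    ext x
    simp only [S, mem_filter, mem_univ, true_and, Finset.mem_image]
    constructor
    · intro hx
      refine ⟨fun i => ⟨(x i : ℕ) - (v i : ℕ), by have := hx i; omega⟩, ?_⟩
      funext i
      exact Fin.ext (by simp only [f]; have := hx i; omega)
    · rintro ⟨j, rfl⟩ i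
      simp only [f]
      have := (j i).2
      omega
  rw [himg, Finset.card_image_of_injective _ hinj, Finset.card_univ]
  simp [Fintype.card_fun]

lemma numeric (q n d L : ℕ) (hq : 2 ≤ q) (hn : 1 ≤ n)
    (hbound : (d : ℝ) * Real.logb q n + Real.logb q ((q : ℝ) / ((q : ℝ) - 1))
        ≤ (L : ℝ) ^ d) : n ^ d * q ≤ q ^ (L ^ d) * (q - 1) := by
  have hq1 : (1:ℝ) < q := by exact_mod_cast hq
  have hn0 : (0:ℝ) < n := by exact_mod_cast hn
  have hq10 : (0:ℝ) < (q:ℝ) - 1 := by linarith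
  have hx : (0:ℝ) < (n:ℝ)^d * ((q:ℝ)/((q:ℝ)-1)) := by positivity
  have hlog : Real.logb q ((n:ℝ)^d * ((q:ℝ)/((q:ℝ)-1))) ≤ ((L^d : ℕ) : ℝ) := by
    rw [Real.logb_mul (by positivity) (by positivity), Real.logb_pow]
    push_cast
    convert hbound using 2
  have hle : (n:ℝ)^d * ((q:ℝ)/((q:ℝ)-1)) ≤ (q:ℝ) ^ (L^d : ℕ) := by
    have := (Real.logb_le_iff_le_rpow hq1 hx).mp hlog
    rwa [Real.rpow_natCast] at this
  have key : (n:ℝ)^d * q ≤ (q:ℝ)^(L^d) * ((q:ℝ)-1) := by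
    have := mul_le_mul_of_nonneg_right hle (le_of_lt hq10)
    calc (n:ℝ)^d * q = (n:ℝ)^d * ((q:ℝ)/((q:ℝ)-1)) * ((q:ℝ)-1) := by
          field_simp
      _ ≤ (q:ℝ)^(L^d) * ((q:ℝ)-1) := this
  have : ((n^d * q : ℕ) : ℝ) ≤ ((q^(L^d) * (q-1) : ℕ) : ℝ) := by
    push_cast [Nat.cast_sub (by omega : 1 ≤ q)]
    convert key using 2
  exact_mod_cast this

theorem stmt1 (q n d L : ℕ) (hq : 2 ≤ q) (hn : 1 ≤ n) (hd : 1 ≤ d) (hL : 1 ≤ L)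
    (hLn : L ≤ n)
    (hbound : (d : ℝ) * Real.logb q n + Real.logb q ((q : ℝ) / ((q : ℝ) - 1))
        ≤ (L : ℝ) ^ d) :
    q ^ (n ^ d - 1) ≤
      Nat.card {W : (Fin d → Fin n) → Fin q // ∀ v : Fin d → ℕ, ¬ zeroCubeAt n d L q W v} := by
  classical
  -- total number of arrays
  have htot : Fintype.card ((Fin d → Fin n) → Fin q) = q ^ (n ^ d) := by
    simp [Fintype.card_fun]
  set Bad : Finset ((Fin d → Fin n) → Fin q) :=
    univ.filter (fun W => ∃ v : Fin d → ℕ, zeroCubeAt n d L q W v) with hBad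
  set Good : Finset ((Fin d → Fin n) → Fin q) :=
    univ.filter (fun W => ∀ v : Fin d → ℕ, ¬ zeroCubeAt n d L q W v) with hGood
  -- Nat.card of subtype = Good.card
  have hcard : Nat.card {W : (Fin d → Fin n) → Fin q // ∀ v : Fin d → ℕ, ¬ zeroCubeAt n d L q W v}
      = Good.card := by
    rw [Nat.card_eq_fintype_card, Fintype.card_subtype]
  -- bound on each fixed-position bad set
  have hA : ∀ v : Fin d → Fin n,
      (univ.filter (fun W : (Fin d → Fin n) → Fin q =>
        zeroCubeAt n d L q W (fun i => (v i : ℕ)))).card ≤ q ^ (n ^ d - L ^ d) := by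
    intro v
    by_cases hv : ∀ i, (v i : ℕ) + L ≤ n
    · set S := univ.filter (fun x : Fin d → Fin n =>
        ∀ i, (v i:ℕ) ≤ (x i:ℕ) ∧ (x i:ℕ) < (v i:ℕ) + L) with hS
      have hScard : S.card = L ^ d := cubeCard n d L v hv
      have hcompl : Fintype.card {x : Fin d → Fin n // x ∉ S} = n ^ d - L ^ d := by
        rw [Fintype.card_subtype_compl, Fintype.card_coe, hScard]
        simp [Fintype.card_fun]
      have htarget : Fintype.card ({x : Fin d → Fin n // x ∉ S} → Fin q)
          = q ^ (n ^ d - L ^ d) := by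
        rw [Fintype.card_fun, hcompl, Fintype.card_fin]
      calc (univ.filter (fun W : (Fin d → Fin n) → Fin q =>
              zeroCubeAt n d L q W (fun i => (v i : ℕ)))).card
          ≤ (univ : Finset ({x : Fin d → Fin n // x ∉ S} → Fin q)).card := by
            apply Finset.card_le_card_of_injOn (fun W => fun x => W x.1)
            · intro _ _; exact mem_univ _
            · intro W hW W' hW' h
              simp only [mem_coe, mem_filter, mem_univ, true_and] at hW hW'
              funext x
              by_cases hx : x ∈ S
              · simp only [hS, mem_filter, mem_univ, true_and] at hx
                have h1 := hW.2 x hx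
                have h2 := hW'.2 x hx
                exact Fin.ext (by omega)
              · exact congrFun h ⟨x, hx⟩
        _ = q ^ (n ^ d - L ^ d) := by rw [Finset.card_univ, htarget]
    · convert Nat.zero_le _
      rw [Finset.card_eq_zero, Finset.filter_eq_empty_iff]
      intro W _ hW
      exact hv hW.1
  -- union bound
  have hBadsub : Bad ⊆ Finset.biUnion univ (fun v : Fin d → Fin n =>
      univ.filter (fun W : (Fin d → Fin n) → Fin q =>
        zeroCubeAt n d L q W (fun i => (v i : ℕ)))) := by
    intro W hW
    simp only [hBad, mem_filter, mem_univ, true_and] at hW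
    obtain ⟨v, hv⟩ := hW
    have hlt : ∀ i, v i < n := fun i => by have := hv.1 i; omega
    refine Finset.mem_biUnion.mpr ⟨fun i => ⟨v i, hlt i⟩, mem_univ _, ?_⟩
    simp only [mem_filter, mem_univ, true_and]
    exact hv
  have hBadCard : Bad.card ≤ n ^ d * q ^ (n ^ d - L ^ d) := by
    calc Bad.card ≤ _ := Finset.card_le_card hBadsub
      _ ≤ ∑ v : Fin d → Fin n, (univ.filter (fun W : (Fin d → Fin n) → Fin q =>
            zeroCubeAt n d L q W (fun i => (v i : ℕ)))).card := Finset.card_biUnion_le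
      _ ≤ ∑ _v : Fin d → Fin n, q ^ (n ^ d - L ^ d) := Finset.sum_le_sum (fun v _ => hA v)
      _ = n ^ d * q ^ (n ^ d - L ^ d) := by
          rw [Finset.sum_const, Finset.card_univ]
          simp [Fintype.card_fun, smul_eq_mul]
  -- numeric bound : Bad.card ≤ q^{n^d} - q^{n^d - 1}
  have hnum := numeric q n d L hq hn hbound
  have hLd : L ^ d ≤ n ^ d := Nat.pow_le_pow_left hLn d
  have hnd1 : 1 ≤ n ^ d := Nat.one_le_pow _ _ hn
  have hqpos : 0 < q := by omega
  have hsplit : q ^ (n ^ d) = q ^ (n ^ d - 1) * q := by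
    rw [← pow_succ]; congr 1; omega
  have hsplit2 : q ^ (n ^ d) = q ^ (L ^ d) * q ^ (n ^ d - L ^ d) := by
    rw [← pow_add]; congr 1; omega
  have hBadBound : Bad.card * q ≤ (q ^ (n ^ d) - q ^ (n ^ d - 1)) * q := by
    calc Bad.card * q ≤ n ^ d * q ^ (n ^ d - L ^ d) * q := by
          exact Nat.mul_le_mul_right q hBadCard
      _ = (n ^ d * q) * q ^ (n ^ d - L ^ d) := by ring
      _ ≤ (q ^ (L ^ d) * (q - 1)) * q ^ (n ^ d - L ^ d) := Nat.mul_le_mul_right _ hnum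
      _ = (q - 1) * q ^ (n ^ d) := by rw [hsplit2]; ring
      _ = (q ^ (n ^ d) - q ^ (n ^ d - 1)) * q := by
          rw [Nat.sub_mul, Nat.sub_mul, one_mul, ← hsplit, mul_comm]
  have hBadBound' : Bad.card ≤ q ^ (n ^ d) - q ^ (n ^ d - 1) :=
    Nat.le_of_mul_le_mul_right hBadBound hqpos
  -- Good.card = total - Bad.card
  have hGB : Good.card + Bad.card = q ^ (n ^ d) := by
    rw [← htot, ← Finset.card_univ]
    have := Finset.card_filter_add_card_filter_not
      (s := (univ : Finset ((Fin d → Fin n) → Fin q)))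
      (p := fun W => ∃ v : Fin d → ℕ, zeroCubeAt n d L q W v)
    rw [← this]
    simp only [hGood, hBad, not_exists]
    omega
  have hle : q ^ (n ^ d - 1) ≤ q ^ (n ^ d) := Nat.pow_le_pow_right hqpos (by omega)
  rw [hcard]
  omega
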